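/- Let G and H be graphs and let v be a simplicial vertex of G. Then γ_gr(G ⊠ H) ≤ γ_gr(H) + γ_gr((G − v) ⊠ H). -/

import Mathlib

open SimpleGraph

/-- The closed neighborhood of a vertex. -/
def closedNbhd {V : Type*} (G : SimpleGraph V) (v : V) : Set V :=
  insert v (G.neighborSet v)

/-- A legal (closed neighborhood) sequence: distinct vertices, each dominating
a vertex not dominated by its predecessors. -/
def IsLegalSeq {V : Type*} (G : SimpleGraph V) (l : List V) : Prop :=
  l.Nodup ∧ ∀ i : Fin l.length, ∃ u, u ∈ closedNbhd G (l.get i) ∧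
    ∀ j : Fin l.length, (j : ℕ) < (i : ℕ) → u ∉ closedNbhd G (l.get j)

/-- A dominating sequence: a legal sequence whose vertex set dominates the graph. -/
def IsDomSeq {V : Type*} (G : SimpleGraph V) (l : List V) : Prop :=
  IsLegalSeq G l ∧ ∀ v : V, ∃ u ∈ l, v ∈ closedNbhd G u

/-- The Grundy domination number: maximum length of a dominating sequence. -/
noncomputable def grundyDomNum {V : Type*} (G : SimpleGraph V) : ℕ :=
  sSup {n | ∃ l : List V, IsDomSeq G l ∧ l.length = n}

/-- A legal open neighborhood sequence. -/
def IsLegalOpenSeq {V : Type*} (G : SimpleGraph V) (l : List V) : Prop :=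
  l.Nodup ∧ ∀ i : Fin l.length, ∃ u, u ∈ G.neighborSet (l.get i) ∧
    ∀ j : Fin l.length, (j : ℕ) < (i : ℕ) → u ∉ G.neighborSet (l.get j)

/-- A total dominating sequence. -/
def IsTotalDomSeq {V : Type*} (G : SimpleGraph V) (l : List V) : Prop :=
  IsLegalOpenSeq G l ∧ ∀ v : V, ∃ u ∈ l, v ∈ G.neighborSet u

/-- The Grundy total domination number. -/
noncomputable def grundyTotalDomNum {V : Type*} (G : SimpleGraph V) : ℕ :=
  sSup {n | ∃ l : List V, IsTotalDomSeq G l ∧ l.length = n}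

/-- The edge clique cover number: minimum size of a family of cliques covering all edges. -/
noncomputable def edgeCliqueCoverNum {V : Type*} (G : SimpleGraph V) : ℕ :=
  sInf {n | ∃ C : Finset (Set V), C.card = n ∧ (∀ Q ∈ C, G.IsClique Q) ∧
    ∀ u v : V, G.Adj u v → ∃ Q ∈ C, u ∈ Q ∧ v ∈ Q}

/-- The independence number. -/
noncomputable def indepNum {V : Type*} (G : SimpleGraph V) : ℕ :=
  sSup {n | ∃ s : Finset V, (s : Set V).Pairwise (fun u v => ¬ G.Adj u v) ∧ s.card = n}

/-- The lexicographic product of simple graphs. -/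
def lexProd {V W : Type*} (G : SimpleGraph V) (H : SimpleGraph W) : SimpleGraph (V × W) where
  Adj x y := G.Adj x.1 y.1 ∨ (x.1 = y.1 ∧ H.Adj x.2 y.2)
  symm := by
    constructor
    rintro x y (h | ⟨e, h⟩)
    · exact Or.inl h.symm
    · exact Or.inr ⟨e.symm, h.symm⟩
  loopless := by
    constructor
    rintro x (h | ⟨_, h⟩)
    · exact G.irrefl h
    · exact H.irrefl h

/-- The strong product of simple graphs. -/
def strongProd {V W : Type*} (G : SimpleGraph V) (H : SimpleGraph W) : SimpleGraph (V × W) where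
  Adj x y := x ≠ y ∧ (x.1 = y.1 ∨ G.Adj x.1 y.1) ∧ (x.2 = y.2 ∨ H.Adj x.2 y.2)
  symm := by
    constructor
    rintro x y ⟨hne, h1, h2⟩
    refine ⟨hne.symm, ?_, ?_⟩
    · rcases h1 with h | h
      · exact Or.inl h.symm
      · exact Or.inr h.symm
    · rcases h2 with h | h
      · exact Or.inl h.symm
      · exact Or.inr h.symm
  loopless := ⟨fun x h => h.1 rfl⟩

/-- The direct (tensor) product of simple graphs. -/
def directProd {V W : Type*} (G : SimpleGraph V) (H : SimpleGraph W) : SimpleGraph (V × W) where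
  Adj x y := G.Adj x.1 y.1 ∧ H.Adj x.2 y.2
  symm := ⟨fun _ _ h => ⟨h.1.symm, h.2.symm⟩⟩
  loopless := ⟨fun x h => G.irrefl h.1⟩

/-- The boundary of a set of vertices. -/
def boundarySet {V : Type*} (G : SimpleGraph V) (S : Set V) : Set V :=
  {u | u ∉ S ∧ ∃ s ∈ S, G.Adj u s}

/-- `aVal G l` is the number of entries of `l` not adjacent to any earlier entry. -/
def aVal {V : Type*} (G : SimpleGraph V) [DecidableRel G.Adj] (l : List V) : ℕ :=
  (Finset.univ.filter (fun i : Fin l.length =>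
    ∀ j : Fin l.length, (j : ℕ) < (i : ℕ) → ¬ G.Adj (l.get j) (l.get i))).card

-- auxiliary lemmas block 1
open Classical in
lemma mem_closedNbhd_iff {V : Type*} (G : SimpleGraph V) (u w : V) :
    u ∈ closedNbhd G w ↔ u = w ∨ G.Adj w u := by
  simp [closedNbhd, SimpleGraph.mem_neighborSet]

lemma mem_closedNbhd_strongProd {V W : Type*} (G : SimpleGraph V) (H : SimpleGraph W)
    (x y : V × W) :
    x ∈ closedNbhd (strongProd G H) y ↔
      (x.1 = y.1 ∨ G.Adj x.1 y.1) ∧ (x.2 = y.2 ∨ H.Adj x.2 y.2) := by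
  rw [mem_closedNbhd_iff]
  constructor
  · rintro (rfl | ⟨hne, h1, h2⟩)
    · exact ⟨Or.inl rfl, Or.inl rfl⟩
    · constructor
      · rcases h1 with h | h
        · exact Or.inl h.symm
        · exact Or.inr h.symm
      · rcases h2 with h | h
        · exact Or.inl h.symm
        · exact Or.inr h.symm
  · rintro ⟨h1, h2⟩
    by_cases hxy : x = y
    · exact Or.inl hxy
    · refine Or.inr ⟨fun h => hxy h.symm, ?_, ?_⟩
      · rcases h1 with h | h
        · exact Or.inl h.symm
        · exact Or.inr h.symm
      · rcases h2 with h | h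
        · exact Or.inl h.symm
        · exact Or.inr h.symm

lemma simplicial_step {V : Type*} {G : SimpleGraph V} {v : V}
    (hv : G.IsClique (G.neighborSet v)) {x g : V}
    (hx : x = v ∨ G.Adj v x) (hg : g = v ∨ G.Adj v g) :
    x = g ∨ G.Adj x g := by
  rcases hx with rfl | hx
  · rcases hg with rfl | hg
    · exact Or.inl rfl
    · exact Or.inr hg
  · rcases hg with rfl | hg
    · exact Or.inr hx.symm
    · by_cases hxg : x = g
      · exact Or.inl hxg
      · exact Or.inr (hv hx hg hxg)

lemma extend_legal {A : Type*} [Fintype A] (K : SimpleGraph A) :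
    ∀ (k : ℕ) (l : List A), IsLegalSeq K l → Fintype.card A ≤ l.length + k →
      ∃ l', IsDomSeq K l' ∧ l.length ≤ l'.length := by
  intro k
  induction k with
  | zero =>
    intro l hl hcard
    refine ⟨l, ⟨hl, ?_⟩, le_rfl⟩
    have hlen : l.length = Fintype.card A :=
      le_antisymm hl.1.length_le_card (by simpa using hcard)
    have hall : ∀ a : A, a ∈ l := by
      classical
      have : l.toFinset = Finset.univ := Finset.eq_univ_of_card _ (by
        rw [List.toFinset_card_of_nodup hl.1, hlen, Fintype.card])
      intro a; rw [← List.mem_toFinset, this]; exact Finset.mem_univ a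
    intro w
    exact ⟨w, hall w, Set.mem_insert _ _⟩
  | succ k ih =>
    intro l hl hcard
    by_cases hdom : ∀ w : A, ∃ u ∈ l, w ∈ closedNbhd K u
    · exact ⟨l, ⟨hl, hdom⟩, le_rfl⟩
    push_neg at hdom
    obtain ⟨w, hw⟩ := hdom
    have hwl : w ∉ l := fun h => hw w h (Set.mem_insert _ _)
    have hget : ∀ i : Fin (l ++ [w]).length,
        (l ++ [w]).get i = if h : (i : ℕ) < l.length then l.get ⟨i, h⟩ else w := by
      intro i
      split_ifs with h
      · rw [List.get_eq_getElem, List.get_eq_getElem, List.getElem_append_left h]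
      · have hi : (i : ℕ) = l.length := by
          have := i.2; simp at this; omega
        rw [List.get_eq_getElem, List.getElem_append_right (by omega)]
        simp [hi]
    have hleg : IsLegalSeq K (l ++ [w]) := by
      constructor
      · rw [List.nodup_append]
        exact ⟨hl.1, List.nodup_singleton w, by simp; intro a ha h; exact hwl (h ▸ ha)⟩
      · intro i
        by_cases hi : (i : ℕ) < l.length
        · obtain ⟨u, hu1, hu2⟩ := hl.2 ⟨i, hi⟩
          refine ⟨u, by rw [hget i]; simpa [hi] using hu1, ?_⟩
          intro j hj
          have hjl : (j : ℕ) < l.length := lt_trans hj hi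
          rw [hget j]
          simpa [hjl] using hu2 ⟨j, hjl⟩ hj
        · refine ⟨w, by rw [hget i]; simp [hi]; exact Set.mem_insert _ _, ?_⟩
          intro j hj
          have hjl : (j : ℕ) < l.length := by
            have := i.2; simp at this; omega
          rw [hget j]
          simp only [hjl, dif_pos]
          exact hw _ (l.get_mem _)
    obtain ⟨l', h1, h2⟩ := ih (l ++ [w]) hleg (by simp; omega)
    exact ⟨l', h1, le_trans (by simp) h2⟩

lemma legal_le_grundy {A : Type*} [Fintype A] (K : SimpleGraph A) (l : List A)
    (h : IsLegalSeq K l) : l.length ≤ grundyDomNum K := by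
  obtain ⟨l', h1, h2⟩ := extend_legal K (Fintype.card A) l h (by omega)
  refine le_trans h2 (le_csSup ?_ ⟨l', h1, rfl⟩)
  exact ⟨Fintype.card A, by rintro n ⟨m, hm, rfl⟩; exact hm.1.1.length_le_card⟩

lemma grundy_le_of_forall {A : Type*} (K : SimpleGraph A) (B : ℕ)
    (h : ∀ l : List A, IsDomSeq K l → l.length ≤ B) : grundyDomNum K ≤ B := by
  apply csSup_le'
  rintro n ⟨l, hl, rfl⟩
  exact h l hl

lemma legal_of_attach_map {n : ℕ} {A : Type*} (K : SimpleGraph A) (m : List (Fin n))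
    (f : {i // i ∈ m} → A)
    (hm : m.Pairwise (· < ·))
    (hinj : ∀ i j : {i // i ∈ m}, (i : Fin n) < (j : Fin n) → f i ≠ f j)
    (hleg : ∀ i : {i // i ∈ m}, ∃ u ∈ closedNbhd K (f i),
      ∀ j : {i // i ∈ m}, (j : Fin n) < (i : Fin n) → u ∉ closedNbhd K (f j)) :
    IsLegalSeq K (m.attach.map f) ∧ (m.attach.map f).length = m.length := by
  have hma : m.attach.Pairwise (fun a b : {i // i ∈ m} => (a : Fin n) < (b : Fin n)) := by
    have h2 := hm
    rw [← List.attach_map_subtype_val m, List.pairwise_map] at h2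
    exact h2
  refine ⟨⟨?_, ?_⟩, by simp⟩
  · show (m.attach.map f).Pairwise (· ≠ ·)
    rw [List.pairwise_map]
    exact hma.imp (fun h => hinj _ _ h)
  · intro k
    have hk : (k : ℕ) < m.attach.length := by simpa using k.2
    obtain ⟨u, hu1, hu2⟩ := hleg (m.attach.get ⟨k, hk⟩)
    have hgk : (m.attach.map f).get k = f (m.attach.get ⟨k, hk⟩) := by
      rw [List.get_eq_getElem, List.getElem_map]; rfl
    refine ⟨u, by rw [hgk]; exact hu1, ?_⟩
    intro j hj
    have hj' : (j : ℕ) < m.attach.length := by simpa using j.2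
    have hgj : (m.attach.map f).get j = f (m.attach.get ⟨j, hj'⟩) := by
      rw [List.get_eq_getElem, List.getElem_map]; rfl
    rw [hgj]
    exact hu2 _ (List.pairwise_iff_get.1 hma ⟨j, hj'⟩ ⟨k, hk⟩ hj)

theorem stmt_19 {V W : Type*} [Fintype V] [Fintype W] [DecidableEq V]
    (G : SimpleGraph V) (H : SimpleGraph W) (v : V)
    (hv : G.IsClique (G.neighborSet v)) :
    grundyDomNum (strongProd G H) ≤
      grundyDomNum H + grundyDomNum (strongProd (G.induce {u : V | u ≠ v}) H) := by
  classical
  set G' := G.induce {u : V | u ≠ v} with hG'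
  set K₂ := strongProd G' H with hK₂
  apply grundy_le_of_forall
  intro l hdl
  obtain ⟨⟨hnd, hfoot⟩, -⟩ := hdl
  set SP := strongProd G H with hSP
  set n := l.length with hn
  set P : Fin n → Prop := fun i => ∃ y : W, (v, y) ∈ closedNbhd SP (l.get i) ∧
      ∀ j : Fin n, (j : ℕ) < (i : ℕ) → (v, y) ∉ closedNbhd SP (l.get j) with hPdef
  set p : Fin n → Bool := fun i => decide (P i) with hpdef
  set m₁ := (List.finRange n).filter p with hm1
  set m₂ := (List.finRange n).filter (fun i => ! p i) with hm2
  have hlen : n = m₁.length + m₂.length := by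
    simpa [hm1, hm2] using List.length_eq_length_filter_add (l := List.finRange n) p
  have hpw := List.pairwise_lt_finRange n
  have hm₁pw : m₁.Pairwise (· < ·) := hpw.sublist List.filter_sublist
  have hm₂pw : m₂.Pairwise (· < ·) := hpw.sublist List.filter_sublist
  have hP₁ : ∀ i : Fin n, i ∈ m₁ → P i := by
    intro i hi
    have := (List.mem_filter.1 hi).2
    simpa [hpdef] using this
  have hP₂ : ∀ i : Fin n, i ∈ m₂ → ¬ P i := by
    intro i hi
    have := (List.mem_filter.1 hi).2
    simpa [hpdef] using this
  have hmem : ∀ (x : V) (y : W) (i : Fin n), (x, y) ∈ closedNbhd SP (l.get i) ↔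
      (x = (l.get i).1 ∨ G.Adj x (l.get i).1) ∧ (y = (l.get i).2 ∨ H.Adj y (l.get i).2) :=
    fun x y i => mem_closedNbhd_strongProd G H (x, y) (l.get i)
  have hPv : ∀ i : Fin n, P i → v = (l.get i).1 ∨ G.Adj v (l.get i).1 := by
    rintro i ⟨y, hy1, -⟩
    exact ((hmem v y i).1 hy1).1
  have hW₂ : ∀ i : Fin n, ¬ P i → ∃ x y, (x, y) ∈ closedNbhd SP (l.get i) ∧
      (∀ j : Fin n, (j : ℕ) < (i : ℕ) → (x, y) ∉ closedNbhd SP (l.get j)) ∧ x ≠ v := by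
    intro i hPi
    obtain ⟨u, hu1, hu2⟩ := hfoot i
    refine ⟨u.1, u.2, by simpa using hu1, by simpa using hu2, ?_⟩
    intro hx
    exact hPi ⟨u.2, by rw [← hx]; simpa using hu1, by rw [← hx]; simpa using hu2⟩
  have hne₂ : ∀ i : Fin n, ¬ P i → (l.get i).1 ≠ v := by
    intro i hPi hgi
    obtain ⟨x, y, hu1, hu2, hxv⟩ := hW₂ i hPi
    apply hPi
    refine ⟨y, (hmem v y i).2 ⟨Or.inl hgi.symm, ((hmem x y i).1 hu1).2⟩, ?_⟩
    intro j hj hmemj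
    obtain ⟨hv1, hy1⟩ := (hmem v y j).1 hmemj
    apply hu2 j hj
    refine (hmem x y j).2 ⟨?_, hy1⟩
    have hxN : x = v ∨ G.Adj v x := by
      rcases ((hmem x y i).1 hu1).1 with h | h
      · exact Or.inl (h.trans hgi)
      · exact Or.inr (hgi ▸ h).symm
    have hgN : (l.get j).1 = v ∨ G.Adj v (l.get j).1 := by
      rcases hv1 with h | h
      · exact Or.inl h.symm
      · exact Or.inr h
    exact simplicial_step hv hxN hgN
  -- first sequence, in H
  have hinj1 : ∀ i j : {i // i ∈ m₁}, (i : Fin n) < (j : Fin n) →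
      (l.get i.1).2 ≠ (l.get j.1).2 := by
    intro i j hij heq
    obtain ⟨y, hy1, hy2⟩ := hP₁ j.1 j.2
    apply hy2 i.1 hij
    obtain ⟨hj1, hj2⟩ := (hmem v y j.1).1 hy1
    refine (hmem v y i.1).2 ⟨hPv i.1 (hP₁ i.1 i.2), ?_⟩
    rw [heq]; exact hj2
  have hleg1 : ∀ i : {i // i ∈ m₁}, ∃ u ∈ closedNbhd H ((l.get i.1).2),
      ∀ j : {i // i ∈ m₁}, (j : Fin n) < (i : Fin n) → u ∉ closedNbhd H ((l.get j.1).2) := by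
    intro i
    obtain ⟨y, hy1, hy2⟩ := hP₁ i.1 i.2
    obtain ⟨-, hyc⟩ := (hmem v y i.1).1 hy1
    refine ⟨y, ?_, ?_⟩
    · rw [mem_closedNbhd_iff]
      rcases hyc with h | h
      · exact Or.inl h
      · exact Or.inr h.symm
    · intro j hj hymem
      apply hy2 j.1 hj
      rw [mem_closedNbhd_iff] at hymem
      refine (hmem v y j.1).2 ⟨hPv j.1 (hP₁ j.1 j.2), ?_⟩
      rcases hymem with h | h
      · exact Or.inl h
      · exact Or.inr h.symm
  obtain ⟨hS₁leg, hS₁len⟩ :=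
    legal_of_attach_map H m₁ (fun i => (l.get i.1).2) hm₁pw hinj1 hleg1
  have hb₁ : m₁.length ≤ grundyDomNum H := hS₁len ▸ legal_le_grundy H _ hS₁leg
  -- second sequence, in K₂
  set f₂ : {i // i ∈ m₂} → ({u : V | u ≠ v} × W) :=
    fun i => (⟨(l.get i.1).1, hne₂ i.1 (hP₂ i.1 i.2)⟩, (l.get i.1).2) with hf₂
  have hmem₂ : ∀ (a : {u : V | u ≠ v}) (y : W) (b : ({u : V | u ≠ v} × W)),
      (a, y) ∈ closedNbhd K₂ b ↔
        (((a : V) = (b.1 : V) ∨ G.Adj (a : V) (b.1 : V)) ∧ (y = b.2 ∨ H.Adj y b.2)) := by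
    intro a y b
    rw [hK₂, mem_closedNbhd_strongProd]
    simp [hG', Subtype.ext_iff]
  have hinj2 : ∀ i j : {i // i ∈ m₂}, (i : Fin n) < (j : Fin n) → f₂ i ≠ f₂ j := by
    intro i j hij heq
    have h3 : l.get i.1 = l.get j.1 :=
      Prod.ext_iff.2
        ⟨congrArg (fun z : ({u : V | u ≠ v} × W) => (z.1 : V)) heq,
         congrArg (fun z : ({u : V | u ≠ v} × W) => z.2) heq⟩
    exact absurd ((hnd.get_inj_iff).1 h3) (ne_of_lt hij)
  have hleg2 : ∀ i : {i // i ∈ m₂}, ∃ u ∈ closedNbhd K₂ (f₂ i),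
      ∀ j : {i // i ∈ m₂}, (j : Fin n) < (i : Fin n) → u ∉ closedNbhd K₂ (f₂ j) := by
    intro i
    obtain ⟨x, y, hu1, hu2, hxv⟩ := hW₂ i.1 (hP₂ i.1 i.2)
    refine ⟨(⟨x, hxv⟩, y), ?_, ?_⟩
    · exact (hmem₂ _ _ _).2 ((hmem x y i.1).1 hu1)
    · intro j hj hmemj
      exact hu2 j.1 hj ((hmem x y j.1).2 ((hmem₂ _ _ _).1 hmemj))
  obtain ⟨hS₂leg, hS₂len⟩ := legal_of_attach_map K₂ m₂ f₂ hm₂pw hinj2 hleg2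
  have hb₂ : m₂.length ≤ grundyDomNum K₂ := hS₂len ▸ legal_le_grundy K₂ _ hS₂leg
  calc l.length = m₁.length + m₂.length := hlen
    _ ≤ grundyDomNum H + grundyDomNum K₂ := Nat.add_le_add hb₁ hb₂
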